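/- arXiv:1709.04929 — 2 statements merged into one kernel-verified Lean document; each statement's English description precedes it below -/
import Mathlib

section
/- Let a, a', b, b' be real numbers with a² + b² = 1 and a·a' + b·b' = 0, and let v, w ∈ ℂ^m. Then ‖2aa'v + a²w‖² + 2‖(a'b + ab')v + abw‖² + ‖2bb'v + b²w‖² = ‖w‖² + 2(a'b − ab')²‖v‖². -/
lemma norm_smul_add_smul_sq (m : ℕ) (c d : ℝ) (v w : EuclideanSpace ℂ (Fin m)) :
    ‖(c : ℂ) • v + (d : ℂ) • w‖ ^ 2 =
      c ^ 2 * ‖v‖ ^ 2 + 2 * (c * d) * (RCLike.re (inner ℂ v w : ℂ)) + d ^ 2 * ‖w‖ ^ 2 := by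
  rw [@norm_add_sq ℂ _ _ _ _, inner_smul_left, inner_smul_right, norm_smul, norm_smul]
  simp [mul_pow]
  ring

/-- Let `a, a', b, b'` be real numbers with `a² + b² = 1` and
`a·a' + b·b' = 0`, and let `v, w ∈ ℂ^m` (with `m ≥ 1`). Then
`‖2aa'v + a²w‖² + 2‖(a'b + ab')v + abw‖² + ‖2bb'v + b²w‖²
  = ‖w‖² + 2(a'b − ab')²‖v‖²`. -/
theorem norm_combination_identity (m : ℕ) (hm : 1 ≤ m) (a a' b b' : ℝ)
    (h1 : a ^ 2 + b ^ 2 = 1) (h2 : a * a' + b * b' = 0)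
    (v w : EuclideanSpace ℂ (Fin m)) :
    ‖((2 * a * a' : ℝ) : ℂ) • v + ((a ^ 2 : ℝ) : ℂ) • w‖ ^ 2 +
      2 * ‖((a' * b + a * b' : ℝ) : ℂ) • v + ((a * b : ℝ) : ℂ) • w‖ ^ 2 +
      ‖((2 * b * b' : ℝ) : ℂ) • v + ((b ^ 2 : ℝ) : ℂ) • w‖ ^ 2 =
      ‖w‖ ^ 2 + 2 * (a' * b - a * b') ^ 2 * ‖v‖ ^ 2 := by
  rw [norm_smul_add_smul_sq, norm_smul_add_smul_sq, norm_smul_add_smul_sq]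
  set V := ‖v‖ ^ 2
  set W := ‖w‖ ^ 2
  set P := (RCLike.re (inner ℂ v w : ℂ))
  linear_combination (a ^ 2 + b ^ 2 + 1) * W * h1 +
    (4 * (a * a' + b * b') * V + 4 * (a ^ 2 + b ^ 2) * P) * h2
end

section
/- Let y : ℝ → ℂ^m be compactly supported and locally absolutely continuous with a.e. derivative g (i.e. y(b) − y(a) = ∫_a^b g(x) dx for all a ≤ b with g locally integrable), let z : ℝ → ℂ^m be locally absolutely continuous with a.e. derivative h, and suppose z(x) = g(x) − Q(x)y(x) for a.e. x ∈ ℝ. Define y^{[2]}(x) := h(x) + Q(x)z(x) + Q(x)²y(x) for a.e. x, and assume that ⟨y^{[2]}, y⟩, ‖g‖², and ⟨Qg, y⟩ are integrable over ℝ. Then −∫_ℝ ⟨y^{[2]}, y⟩ dx = ∫_ℝ ( ⟨z, g⟩ − ⟨Qg, y⟩ ) dx = ∫_ℝ ( ‖g‖² − 2 Re ⟨Qg, y⟩ ) dx. -/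
open MeasureTheory Set

section aux

variable {E : Type*} [NormedAddCommGroup E] [InnerProductSpace ℂ E] [CompleteSpace E]

variable {E : Type*} [NormedAddCommGroup E] [InnerProductSpace ℂ E] [CompleteSpace E]

lemma inner_integral_left {α : Type*} [MeasurableSpace α] {μ : Measure α}
    {f : α → E} (hf : Integrable f μ) (c : E) :
    ∫ x, (inner ℂ (f x) c : ℂ) ∂μ = inner ℂ (∫ x, f x ∂μ) c := by
  have : ∀ x, (inner ℂ (f x) c : ℂ) = starRingEnd ℂ (inner ℂ c (f x)) := fun x => (inner_conj_symm _ _).symm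
  simp_rw [this]
  rw [integral_conj, integral_inner hf, inner_conj_symm]

lemma tri {a b : ℝ} (hab : a ≤ b) (φ ψ : ℝ → E)
    (hφ : IntegrableOn φ (Ioc a b)) (hψ : IntegrableOn ψ (Ioc a b)) :
    (∫ s in Ioc a b, (inner ℂ (φ s) (∫ t in Ioc a s, ψ t) : ℂ))
      + (∫ t in Ioc a b, (inner ℂ (∫ s in Ioc a t, φ s) (ψ t) : ℂ))
    = inner ℂ (∫ s in Ioc a b, φ s) (∫ t in Ioc a b, ψ t) := by
  set μ := volume.restrict (Ioc a b) with hμ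
  set K : ℝ × ℝ → ℂ := Set.indicator {p : ℝ × ℝ | p.2 ≤ p.1} (fun p => inner ℂ (φ p.1) (ψ p.2))
    with hK
  have hS : MeasurableSet {p : ℝ × ℝ | p.2 ≤ p.1} := measurableSet_le measurable_snd measurable_fst
  have hf_aesm : AEStronglyMeasurable (fun p : ℝ × ℝ => (inner ℂ (φ p.1) (ψ p.2) : ℂ)) (μ.prod μ) := by
    have h1 : AEStronglyMeasurable (fun p : ℝ × ℝ => φ p.1) (μ.prod μ) := hφ.aestronglyMeasurable.comp_fst
    have h2 : AEStronglyMeasurable (fun p : ℝ × ℝ => ψ p.2) (μ.prod μ) := hψ.aestronglyMeasurable.comp_snd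
    exact continuous_inner.comp_aestronglyMeasurable (h1.prodMk h2)
  have hdom : Integrable (fun p : ℝ × ℝ => ‖φ p.1‖ * ‖ψ p.2‖) (μ.prod μ) :=
    hφ.norm.mul_prod hψ.norm
  have hf_int : Integrable (fun p : ℝ × ℝ => (inner ℂ (φ p.1) (ψ p.2) : ℂ)) (μ.prod μ) :=
    hdom.mono' hf_aesm (Filter.Eventually.of_forall fun p => norm_inner_le_norm _ _)
  have hK_int : Integrable K (μ.prod μ) := hf_int.indicator hS
  -- first marginal
  have hfst : ∫ s, ∫ t, K (s, t) ∂μ ∂μ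
      = ∫ s in Ioc a b, (inner ℂ (φ s) (∫ t in Ioc a s, ψ t) : ℂ) := by
    rw [hμ]
    refine setIntegral_congr_fun measurableSet_Ioc fun s hs => ?_
    have h1 : ∀ t, K (s, t) = Set.indicator (Iic s) (fun t => (inner ℂ (φ s) (ψ t) : ℂ)) t := by
      intro t
      by_cases h : t ≤ s <;> simp [hK, Set.indicator, h]
    simp_rw [h1]
    rw [setIntegral_indicator measurableSet_Iic]
    have : Ioc a b ∩ Iic s = Ioc a s := by
      ext t; simp only [mem_inter_iff, mem_Ioc, mem_Iic]
      constructor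
      · rintro ⟨⟨h1, _⟩, h3⟩; exact ⟨h1, h3⟩
      · rintro ⟨h1, h2⟩; exact ⟨⟨h1, h2.trans hs.2⟩, h2⟩
    rw [this, integral_inner (hψ.mono_set (Ioc_subset_Ioc_right hs.2))]
  -- second marginal
  have hsnd : ∫ t, ∫ s, K (s, t) ∂μ ∂μ
      = (inner ℂ (∫ s in Ioc a b, φ s) (∫ t in Ioc a b, ψ t) : ℂ)
        - ∫ t in Ioc a b, (inner ℂ (∫ s in Ioc a t, φ s) (ψ t) : ℂ) := by
    have key : ∀ t ∈ Ioc a b, ∫ s, K (s, t) ∂μ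
        = (inner ℂ (∫ s in Ioc a b, φ s) (ψ t) : ℂ) - (inner ℂ (∫ s in Ioc a t, φ s) (ψ t) : ℂ) := by
      intro t ht
      have h1 : ∀ s, K (s, t) = Set.indicator (Ici t) (fun s => (inner ℂ (φ s) (ψ t) : ℂ)) s := by
        intro s
        by_cases h : t ≤ s <;> simp [hK, Set.indicator, h]
      simp_rw [h1]
      rw [hμ, setIntegral_indicator measurableSet_Ici]
      have h2 : Ioc a b ∩ Ici t = Icc t b := by
        ext s; simp only [mem_inter_iff, mem_Ioc, mem_Icc, mem_Ici]
        constructor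
        · rintro ⟨⟨_, h2⟩, h3⟩; exact ⟨h3, h2⟩
        · rintro ⟨h1, h2⟩; exact ⟨⟨lt_of_lt_of_le ht.1 h1, h2⟩, h1⟩
      rw [h2]
      have h3 : ∫ s in Icc t b, φ s = ∫ s in Ioc t b, φ s := integral_Icc_eq_integral_Ioc
      have h4 : IntegrableOn φ (Ioc a t) := hφ.mono_set (Ioc_subset_Ioc_right ht.2)
      have h5 : IntegrableOn φ (Ioc t b) := hφ.mono_set (Ioc_subset_Ioc_left (le_of_lt ht.1))
      have h6 : (∫ s in Ioc a t, φ s) + (∫ s in Ioc t b, φ s) = ∫ s in Ioc a b, φ s := by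
        rw [← setIntegral_union (Ioc_disjoint_Ioc_of_le le_rfl) measurableSet_Ioc h4 h5,
          Ioc_union_Ioc_eq_Ioc ht.1.le ht.2]
      have h5' : IntegrableOn φ (Icc t b) := by
        rwa [integrableOn_Icc_iff_integrableOn_Ioc]
      rw [inner_integral_left h5' (ψ t)]
      rw [h3, show (∫ s in Ioc t b, φ s) = (∫ s in Ioc a b, φ s) - ∫ s in Ioc a t, φ s by
        rw [← h6]; abel]
      rw [inner_sub_left]
    calc ∫ t, ∫ s, K (s, t) ∂μ ∂μ
        = ∫ t in Ioc a b, ((inner ℂ (∫ s in Ioc a b, φ s) (ψ t) : ℂ)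
            - (inner ℂ (∫ s in Ioc a t, φ s) (ψ t) : ℂ)) := by
          rw [hμ]; exact setIntegral_congr_fun measurableSet_Ioc key
      _ = _ := by
          have hA : Integrable (fun t => (inner ℂ (∫ s in Ioc a b, φ s) (ψ t) : ℂ)) μ :=
            hψ.const_inner _
          have hB : Integrable (fun t => (inner ℂ (∫ s in Ioc a t, φ s) (ψ t) : ℂ)) μ := by
            have hC : Integrable (fun t => ∫ s, K (s, t) ∂μ) μ := by
              have hswap : Integrable (fun p : ℝ × ℝ => K (p.2, p.1)) (μ.prod μ) :=
                hK_int.swap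
              exact hswap.integral_prod_left
            have : (fun t => (inner ℂ (∫ s in Ioc a t, φ s) (ψ t) : ℂ))
                =ᵐ[μ] fun t => (inner ℂ (∫ s in Ioc a b, φ s) (ψ t) : ℂ) - ∫ s, K (s, t) ∂μ := by
              filter_upwards [ae_restrict_mem measurableSet_Ioc] with t ht
              rw [key t ht]; ring
            exact (hA.sub hC).congr this.symm
          rw [integral_sub hA hB, integral_inner hψ]
  have hswap : ∫ s, ∫ t, K (s, t) ∂μ ∂μ = ∫ t, ∫ s, K (s, t) ∂μ ∂μ := by
    have := integral_integral_swap (f := fun s t => K (s, t)) (by exact hK_int)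
    exact this
  rw [hfst] at hswap
  rw [hsnd] at hswap
  linear_combination hswap

lemma parts {a b : ℝ} (hab : a ≤ b) (y g z h : ℝ → E)
    (hg : LocallyIntegrable g volume) (hh : LocallyIntegrable h volume)
    (hy : ∀ a b : ℝ, a ≤ b → y b - y a = ∫ x in a..b, g x)
    (hz : ∀ a b : ℝ, a ≤ b → z b - z a = ∫ x in a..b, h x) :
    (inner ℂ (y b) (z b) : ℂ) - inner ℂ (y a) (z a)
      = ∫ x in Ioc a b, ((inner ℂ (g x) (z x) : ℂ) + inner ℂ (y x) (h x)) := by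
  have hgI : IntegrableOn g (Ioc a b) :=
    (hg.integrableOn_isCompact isCompact_Icc).mono_set Ioc_subset_Icc_self
  have hhI : IntegrableOn h (Ioc a b) :=
    (hh.integrableOn_isCompact isCompact_Icc).mono_set Ioc_subset_Icc_self
  have hgiv : ∀ c d : ℝ, IntervalIntegrable g volume c d := fun c d =>
    (hg.integrableOn_isCompact isCompact_uIcc).intervalIntegrable
  have hhiv : ∀ c d : ℝ, IntervalIntegrable h volume c d := fun c d =>
    (hh.integrableOn_isCompact isCompact_uIcc).intervalIntegrable
  set G : ℝ → E := fun x => ∫ t in a..x, g t with hGdef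
  set H : ℝ → E := fun x => ∫ t in a..x, h t with hHdef
  have hGcont : Continuous G := intervalIntegral.continuous_primitive hgiv a
  have hHcont : Continuous H := intervalIntegral.continuous_primitive hhiv a
  have hyx : ∀ x, a ≤ x → y x = y a + G x := by
    intro x hx
    have h0 : G x = y x - y a := (hy a x hx).symm
    rw [h0]; abel
  have hzx : ∀ x, a ≤ x → z x = z a + H x := by
    intro x hx
    have h0 : H x = z x - z a := (hz a x hx).symm
    rw [h0]; abel
  have hGIoc : ∀ x, a ≤ x → G x = ∫ t in Ioc a x, g t := fun x hx =>
    intervalIntegral.integral_of_le hx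
  have hHIoc : ∀ x, a ≤ x → H x = ∫ t in Ioc a x, h t := fun x hx =>
    intervalIntegral.integral_of_le hx
  -- bounds for G and H on Icc a b
  obtain ⟨CG, hCG⟩ : ∃ C, ∀ x ∈ Icc a b, ‖G x‖ ≤ C :=
    isCompact_Icc.exists_bound_of_continuousOn hGcont.continuousOn
  obtain ⟨CH, hCH⟩ : ∃ C, ∀ x ∈ Icc a b, ‖H x‖ ≤ C :=
    isCompact_Icc.exists_bound_of_continuousOn hHcont.continuousOn
  -- integrability of the four pieces
  have t1 : Integrable (fun x => (inner ℂ (g x) (z a) : ℂ)) (volume.restrict (Ioc a b)) :=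
    hgI.inner_const _
  have t3 : Integrable (fun x => (inner ℂ (y a) (h x) : ℂ)) (volume.restrict (Ioc a b)) :=
    hhI.const_inner _
  have t2 : Integrable (fun x => (inner ℂ (g x) (H x) : ℂ)) (volume.restrict (Ioc a b)) := by
    refine Integrable.mono' (hgI.norm.mul_const CH) ?_ ?_
    · exact continuous_inner.comp_aestronglyMeasurable
        (hgI.aestronglyMeasurable.prodMk hHcont.aestronglyMeasurable.restrict)
    · filter_upwards [ae_restrict_mem measurableSet_Ioc] with x hx
      calc ‖(inner ℂ (g x) (H x) : ℂ)‖ ≤ ‖g x‖ * ‖H x‖ := norm_inner_le_norm _ _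
        _ ≤ ‖g x‖ * CH := by
            exact mul_le_mul_of_nonneg_left (hCH x (mem_Icc_of_Ioc hx)) (norm_nonneg _)
  have t4 : Integrable (fun x => (inner ℂ (G x) (h x) : ℂ)) (volume.restrict (Ioc a b)) := by
    refine Integrable.mono' (hhI.norm.const_mul CG) ?_ ?_
    · exact continuous_inner.comp_aestronglyMeasurable
        (hGcont.aestronglyMeasurable.restrict.prodMk hhI.aestronglyMeasurable)
    · filter_upwards [ae_restrict_mem measurableSet_Ioc] with x hx
      calc ‖(inner ℂ (G x) (h x) : ℂ)‖ ≤ ‖G x‖ * ‖h x‖ := norm_inner_le_norm _ _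
        _ ≤ CG * ‖h x‖ := by
            exact mul_le_mul_of_nonneg_right (hCG x (mem_Icc_of_Ioc hx)) (norm_nonneg _)
  -- rewrite the integrand
  have hcongr : ∫ x in Ioc a b, ((inner ℂ (g x) (z x) : ℂ) + inner ℂ (y x) (h x))
      = ∫ x in Ioc a b, (((inner ℂ (g x) (z a) : ℂ) + inner ℂ (g x) (H x))
          + ((inner ℂ (y a) (h x) : ℂ) + inner ℂ (G x) (h x))) := by
    refine setIntegral_congr_fun measurableSet_Ioc fun x hx => ?_
    rw [hyx x hx.1.le, hzx x hx.1.le, inner_add_right, inner_add_left]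
  have t12 : Integrable (fun x => (inner ℂ (g x) (z a) : ℂ) + inner ℂ (g x) (H x))
      (volume.restrict (Ioc a b)) := t1.add t2
  have t34 : Integrable (fun x => (inner ℂ (y a) (h x) : ℂ) + inner ℂ (G x) (h x))
      (volume.restrict (Ioc a b)) := t3.add t4
  rw [hcongr, integral_add t12 t34, integral_add t1 t2, integral_add t3 t4]
  rw [inner_integral_left hgI (z a), integral_inner hhI (y a)]
  have htri : (∫ x in Ioc a b, (inner ℂ (g x) (H x) : ℂ))
      + (∫ x in Ioc a b, (inner ℂ (G x) (h x) : ℂ))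
      = inner ℂ (∫ s in Ioc a b, g s) (∫ t in Ioc a b, h t) := by
    have e1 : ∫ x in Ioc a b, (inner ℂ (g x) (H x) : ℂ)
        = ∫ x in Ioc a b, (inner ℂ (g x) (∫ t in Ioc a x, h t) : ℂ) :=
      setIntegral_congr_fun measurableSet_Ioc fun x hx => by rw [hHIoc x hx.1.le]
    have e2 : ∫ x in Ioc a b, (inner ℂ (G x) (h x) : ℂ)
        = ∫ x in Ioc a b, (inner ℂ (∫ t in Ioc a x, g t) (h x) : ℂ) :=
      setIntegral_congr_fun measurableSet_Ioc fun x hx => by rw [hGIoc x hx.1.le]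
    rw [e1, e2]
    exact tri hab g h hgI hhI
  rw [hyx b hab, hzx b hab, hGIoc b hab, hHIoc b hab]
  rw [inner_add_left, inner_add_right, inner_add_right]
  rw [← hGIoc b hab, ← hHIoc b hab] at htri ⊢
  rw [← htri]
  ring

end aux

noncomputable section

/-- The action of an `m × m` complex matrix on a vector of `ℂ^m` (Euclidean space). -/
def matApply {m : ℕ} (M : Matrix (Fin m) (Fin m) ℂ) (v : EuclideanSpace ℂ (Fin m)) :
    EuclideanSpace ℂ (Fin m) := Matrix.toEuclideanLin M v

lemma matApply_herm {m : ℕ} {M : Matrix (Fin m) (Fin m) ℂ} (hM : M.IsHermitian)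
    (u v : EuclideanSpace ℂ (Fin m)) :
    (inner ℂ (matApply M u) v : ℂ) = inner ℂ u (matApply M v) := by
  have h1 : Matrix.toEuclideanLin M = LinearMap.adjoint (Matrix.toEuclideanLin M) := by
    conv_lhs => rw [← hM.eq]
    exact Matrix.toEuclideanLin_conjTranspose_eq_adjoint M
  show (inner ℂ (Matrix.toEuclideanLin M u) v : ℂ) = inner ℂ u (Matrix.toEuclideanLin M v)
  conv_lhs => rw [h1]
  exact LinearMap.adjoint_inner_left _ _ _

lemma matApply_add {m : ℕ} (M : Matrix (Fin m) (Fin m) ℂ) (u v : EuclideanSpace ℂ (Fin m)) :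
    matApply M (u + v) = matApply M u + matApply M v := by
  simp [matApply, map_add]

/-- Integration by parts for the quadratic form: if `y` is compactly
supported and locally absolutely continuous with a.e. derivative `g`, `z` is locally
absolutely continuous with a.e. derivative `h`, `z = g − Q·y` a.e., and
`y^{[2]} := h + Q·z + Q²·y`, then (assuming the stated integrabilities)
`−∫ ⟨y^{[2]}, y⟩ = ∫ (⟨z, g⟩ − ⟨Qg, y⟩) = ∫ (‖g‖² − 2 Re ⟨Qg, y⟩)`.
Here `⟨u, z⟩` (linear in the first argument) is Mathlib's `inner z u`. -/
theorem integration_by_parts_quadratic_form (m : ℕ) (hm : 1 ≤ m)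
    (Q : ℝ → Matrix (Fin m) (Fin m) ℂ)
    (hQloc : ∀ i j : Fin m, LocallyIntegrable (fun x => ‖Q x i j‖ ^ 2) volume)
    (hQherm : ∀ᵐ x : ℝ, (Q x).IsHermitian)
    (y g z h : ℝ → EuclideanSpace ℂ (Fin m))
    (hy_supp : HasCompactSupport y)
    (hg_loc : LocallyIntegrable g volume)
    (hy_ftc : ∀ a b : ℝ, a ≤ b → y b - y a = ∫ x in a..b, g x)
    (hh_loc : LocallyIntegrable h volume)
    (hz_ftc : ∀ a b : ℝ, a ≤ b → z b - z a = ∫ x in a..b, h x)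
    (hz_eq : ∀ᵐ x : ℝ, z x = g x - matApply (Q x) (y x))
    (hint1 : Integrable (fun x =>
      (inner ℂ (y x) (h x + matApply (Q x) (z x) + matApply (Q x) (matApply (Q x) (y x))) : ℂ))
      volume)
    (hint2 : Integrable (fun x => ‖g x‖ ^ 2) volume)
    (hint3 : Integrable (fun x => (inner ℂ (y x) (matApply (Q x) (g x)) : ℂ)) volume) :
    -∫ x : ℝ,
        (inner ℂ (y x) (h x + matApply (Q x) (z x) + matApply (Q x) (matApply (Q x) (y x))) : ℂ) =
      ∫ x : ℝ, ((inner ℂ (g x) (z x) : ℂ) - (inner ℂ (y x) (matApply (Q x) (g x)) : ℂ)) ∧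
    -∫ x : ℝ,
        (inner ℂ (y x) (h x + matApply (Q x) (z x) + matApply (Q x) (matApply (Q x) (y x))) : ℂ) =
      ((∫ x : ℝ, (‖g x‖ ^ 2 - 2 * (inner ℂ (y x) (matApply (Q x) (g x)) : ℂ).re) : ℝ) : ℂ) := by
  set W : ℝ → ℂ := fun x => (inner ℂ (y x) (matApply (Q x) (g x)) : ℂ) with hW
  set B : ℝ → ℂ := fun x =>
    (inner ℂ (y x) (h x + matApply (Q x) (z x) + matApply (Q x) (matApply (Q x) (y x))) : ℂ) with hB
  -- a.e. identities
  have eq1 : ∀ᵐ x : ℝ, (inner ℂ (g x) (z x) : ℂ)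
      = ((‖g x‖ ^ 2 : ℝ) : ℂ) - starRingEnd ℂ (W x) := by
    filter_upwards [hz_eq, hQherm] with x hzx hQx
    rw [hzx, inner_sub_right]
    congr 1
    · rw [inner_self_eq_norm_sq_to_K]; norm_num
    · rw [← inner_conj_symm, matApply_herm hQx]
  have eq2 : ∀ᵐ x : ℝ, (inner ℂ (y x) (h x) : ℂ) = B x - W x := by
    filter_upwards [hz_eq, hQherm] with x hzx hQx
    have hg' : g x = z x + matApply (Q x) (y x) := by rw [hzx]; abel
    have : matApply (Q x) (z x) + matApply (Q x) (matApply (Q x) (y x))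
        = matApply (Q x) (g x) := by rw [hg', matApply_add]
    have hWx : (inner ℂ (y x) (matApply (Q x) (z x)) : ℂ)
        + (inner ℂ (y x) (matApply (Q x) (matApply (Q x) (y x))) : ℂ) = W x := by
      simp only [hW]
      rw [← this, inner_add_right]
    simp only [hB, inner_add_right]
    linear_combination -hWx
  -- integrability of conj W
  have hWconj : Integrable (fun x => starRingEnd ℂ (W x)) volume := by
    refine Integrable.mono' hint3.norm
      (Complex.continuous_conj.comp_aestronglyMeasurable hint3.aestronglyMeasurable) ?_
    filter_upwards with x
    simp
  have eq1' : (fun x => (inner ℂ (g x) (z x) : ℂ))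
      =ᶠ[ae volume] fun x => ((‖g x‖ ^ 2 : ℝ) : ℂ) - starRingEnd ℂ (W x) := eq1
  have eq2' : (fun x => (inner ℂ (y x) (h x) : ℂ)) =ᶠ[ae volume] fun x => B x - W x := eq2
  have ig : Integrable (fun x => (inner ℂ (g x) (z x) : ℂ)) volume :=
    (hint2.ofReal.sub hWconj).congr eq1'.symm
  have iyh : Integrable (fun x => (inner ℂ (y x) (h x) : ℂ)) volume :=
    (hint1.sub hint3).congr eq2'.symm
  have hf1 : Integrable (fun x => (inner ℂ (g x) (z x) : ℂ) + (inner ℂ (y x) (h x) : ℂ)) volume :=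
    ig.add iyh
  -- the primitive F = ⟨y, z⟩ vanishes at infinity, so ∫ f1 = 0
  obtain ⟨r, hr⟩ : ∃ r : ℝ, tsupport y ⊆ Metric.closedBall 0 r :=
    (hy_supp.isBounded).subset_closedBall 0
  have hy0 : ∀ x : ℝ, r < |x| → y x = 0 := by
    intro x hx
    apply image_eq_zero_of_notMem_tsupport
    intro hmem
    have := hr hmem
    rw [Metric.mem_closedBall, Real.dist_eq, sub_zero] at this
    linarith
  have hzero : ∫ x : ℝ, ((inner ℂ (g x) (z x) : ℂ) + (inner ℂ (y x) (h x) : ℂ)) = 0 := by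
    have htend : Filter.Tendsto (fun R : ℝ => ∫ x in (-R)..R,
        ((inner ℂ (g x) (z x) : ℂ) + (inner ℂ (y x) (h x) : ℂ))) Filter.atTop
        (nhds (∫ x : ℝ, ((inner ℂ (g x) (z x) : ℂ) + (inner ℂ (y x) (h x) : ℂ)))) :=
      intervalIntegral_tendsto_integral hf1 Filter.tendsto_neg_atTop_atBot Filter.tendsto_id
    have hev : ∀ᶠ R : ℝ in Filter.atTop, (∫ x in (-R)..R,
        ((inner ℂ (g x) (z x) : ℂ) + (inner ℂ (y x) (h x) : ℂ))) = 0 := by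
      filter_upwards [Filter.eventually_gt_atTop (max r 0)] with R hR
      have hR0 : 0 < R := lt_of_le_of_lt (le_max_right r 0) hR
      have hRr : r < R := lt_of_le_of_lt (le_max_left r 0) hR
      have hle : -R ≤ R := by linarith
      rw [intervalIntegral.integral_of_le hle]
      rw [← parts hle y g z h hg_loc hh_loc hy_ftc hz_ftc]
      have h1 : y R = 0 := hy0 R (by rw [abs_of_pos hR0]; exact hRr)
      have h2 : y (-R) = 0 := hy0 (-R) (by rw [abs_of_neg (by linarith)]; simpa using hRr)
      rw [h1, h2, inner_zero_left, inner_zero_left, sub_zero]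
    have hev' : (fun R : ℝ => ∫ x in (-R)..R,
        ((inner ℂ (g x) (z x) : ℂ) + (inner ℂ (y x) (h x) : ℂ)))
        =ᶠ[Filter.atTop] fun _ => (0 : ℂ) := hev
    exact tendsto_nhds_unique htend
      ((Filter.tendsto_congr' hev').mpr tendsto_const_nhds)
  -- assemble
  have hsum : (∫ x : ℝ, (inner ℂ (g x) (z x) : ℂ)) + (∫ x : ℝ, (inner ℂ (y x) (h x) : ℂ)) = 0 := by
    rw [← integral_add ig iyh]; exact hzero
  have hBint : ∫ x : ℝ, B x = (∫ x : ℝ, (inner ℂ (y x) (h x) : ℂ)) + ∫ x : ℝ, W x := by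
    rw [← integral_add iyh hint3]
    refine integral_congr_ae ?_
    filter_upwards [eq2] with x hx
    rw [hx]; ring
  have goal1 : -∫ x : ℝ, B x
      = ∫ x : ℝ, ((inner ℂ (g x) (z x) : ℂ) - W x) := by
    rw [integral_sub ig hint3, hBint]
    linear_combination -hsum
  constructor
  · exact goal1
  · rw [goal1]
    have : ∫ x : ℝ, ((inner ℂ (g x) (z x) : ℂ) - W x)
        = ∫ x : ℝ, ((‖g x‖ ^ 2 - 2 * (W x).re : ℝ) : ℂ) := by
      refine integral_congr_ae ?_
      filter_upwards [eq1] with x hx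
      rw [hx]
      have h2 := Complex.add_conj (W x)
      push_cast at h2 ⊢
      linear_combination -h2
    rw [this]
    exact integral_ofReal
end
end
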